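/- Let X and Y be Banach spaces with Y ≠ {0}. If the set ASE(X,Y) of absolutely strongly exposing operators is dense in L(X,Y), then the set SE(X) of strongly exposing functionals on B_X is dense in X*. -/

import Mathlib

open Filter Topology RCLike Bornology

/-- `f` strongly exposes the bounded set `C` at `x₀`. -/
def StronglyExposes {𝕜 X : Type} [RCLike 𝕜] [NormedAddCommGroup X] [NormedSpace 𝕜 X]
    (f : X →L[𝕜] 𝕜) (C : Set X) (x₀ : X) : Prop :=
  x₀ ∈ C ∧ (∀ x ∈ C, re (f x) ≤ re (f x₀)) ∧
    ∀ u : ℕ → X, (∀ n, u n ∈ C) →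
      Tendsto (fun n => re (f (u n))) atTop (𝓝 (re (f x₀))) →
      Tendsto u atTop (𝓝 x₀)

/-- `f` strongly exposes the closed unit ball at `x₀`. -/
def StronglyExposesBall {𝕜 X : Type} [RCLike 𝕜] [NormedAddCommGroup X] [NormedSpace 𝕜 X]
    (f : X →L[𝕜] 𝕜) (x₀ : X) : Prop :=
  ‖x₀‖ ≤ 1 ∧ re (f x₀) = ‖f‖ ∧
    ∀ u : ℕ → X, (∀ n, ‖u n‖ ≤ 1) →
      Tendsto (fun n => re (f (u n))) atTop (𝓝 ‖f‖) →
      Tendsto u atTop (𝓝 x₀)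

/-- `T` absolutely strongly exposes the closed unit ball at `x₀`. -/
def AbsStronglyExposes {𝕜 X Y : Type} [RCLike 𝕜] [NormedAddCommGroup X] [NormedSpace 𝕜 X]
    [NormedAddCommGroup Y] [NormedSpace 𝕜 Y] (T : X →L[𝕜] Y) (x₀ : X) : Prop :=
  ‖x₀‖ ≤ 1 ∧
    ∀ u : ℕ → X, (∀ n, ‖u n‖ ≤ 1) →
      Tendsto (fun n => ‖T (u n)‖) atTop (𝓝 ‖T‖) →
      ∃ θ : ℕ → 𝕜, (∀ n, ‖θ n‖ = 1) ∧ Tendsto (fun n => θ n • u n) atTop (𝓝 x₀)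

section AuxStmt6
variable {𝕜 X Y : Type} [RCLike 𝕜] [NormedAddCommGroup X] [NormedSpace 𝕜 X]
  [NormedAddCommGroup Y] [NormedSpace 𝕜 Y]

private lemma key_sq6 (z : 𝕜) {c : ℝ} (hz : ‖z‖ ≤ c) :
    ‖z - (c : 𝕜)‖ ^ 2 ≤ 2 * c * (c - re z) := by
  have h1 : ‖z‖ ^ 2 = re z * re z + im z * im z := norm_sq_eq_def
  have h2 : ‖z - (c : 𝕜)‖ ^ 2 = re (z - (c:𝕜)) * re (z - (c:𝕜)) + im (z - (c:𝕜)) * im (z - (c:𝕜)) :=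
    norm_sq_eq_def
  have h3 : re (z - (c:𝕜)) = re z - c := by simp
  have h4 : im (z - (c:𝕜)) = im z := by simp
  have h5 : ‖z‖ ^ 2 ≤ c ^ 2 := by
    have := norm_nonneg z
    nlinarith
  rw [h2, h3, h4]
  nlinarith [h1, h5]

private lemma tendsto_of_re6 {c : ℝ} (a : ℕ → 𝕜) (ha : ∀ n, ‖a n‖ ≤ c)
    (h : Tendsto (fun n => re (a n)) atTop (𝓝 c)) :
    Tendsto a atTop (𝓝 (c : 𝕜)) := by
  rw [tendsto_iff_norm_sub_tendsto_zero]
  have hsq : Tendsto (fun n => ‖a n - (c : 𝕜)‖ ^ 2) atTop (𝓝 0) := by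
    have hub : Tendsto (fun n => 2 * c * (c - re (a n))) atTop (𝓝 (2 * c * (c - c))) :=
      (tendsto_const_nhds.sub h).const_mul _
    simp only [sub_self, mul_zero] at hub
    refine squeeze_zero (fun n => by positivity) (fun n => key_sq6 (a n) (ha n)) hub
  have := hsq.sqrt
  simpa [Real.sqrt_sq (norm_nonneg _), Real.sqrt_zero] using this

private lemma eq_of_re6 {c : ℝ} (z : 𝕜) (hz : ‖z‖ ≤ c) (hre : re z = c) : z = (c : 𝕜) := by
  have := key_sq6 z hz
  rw [hre, sub_self, mul_zero] at this
  have h0 : ‖z - (c:𝕜)‖ = 0 := by nlinarith [norm_nonneg (z - (c:𝕜)), sq_nonneg (‖z - (c:𝕜)‖)]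
  exact sub_eq_zero.mp (norm_eq_zero.mp h0)

private lemma ase_smul6 {S : X →L[𝕜] Y} {x₀ : X} (h : AbsStronglyExposes S x₀) {μ : 𝕜}
    (hμ : ‖μ‖ = 1) : AbsStronglyExposes S (μ • x₀) := by
  obtain ⟨h1, h2⟩ := h
  refine ⟨by rw [norm_smul, hμ, one_mul]; exact h1, fun u hu hTu => ?_⟩
  obtain ⟨θ, hθ, hθu⟩ := h2 u hu hTu
  refine ⟨fun n => μ * θ n, fun n => by rw [norm_mul, hμ, hθ, one_mul], ?_⟩
  have : Tendsto (fun n => μ • (θ n • u n)) atTop (𝓝 (μ • x₀)) := hθu.const_smul μ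
  simpa [smul_smul] using this

private lemma norm_attain6 {S : X →L[𝕜] Y} {x₀ : X} (h : AbsStronglyExposes S x₀) :
    ‖S x₀‖ = ‖S‖ := by
  have hex : ∀ n : ℕ, ∃ x : X, ‖x‖ < 1 ∧ ‖S‖ - (n + 1 : ℝ)⁻¹ < ‖S x‖ := by
    intro n
    exact S.exists_lt_apply_of_lt_opNorm (by
      have : (0:ℝ) < (n + 1 : ℝ)⁻¹ := by positivity
      linarith)
  choose u hu1 hu2 using hex
  have hlim : Tendsto (fun n => ‖S (u n)‖) atTop (𝓝 ‖S‖) := by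
    have hlb : Tendsto (fun n : ℕ => ‖S‖ - (n + 1 : ℝ)⁻¹) atTop (𝓝 (‖S‖ - 0)) :=
      tendsto_const_nhds.sub (by simpa [one_div] using tendsto_one_div_add_atTop_nhds_zero_nat (𝕜 := ℝ))
    rw [sub_zero] at hlb
    refine tendsto_of_tendsto_of_tendsto_of_le_of_le hlb tendsto_const_nhds
      (fun n => (hu2 n).le) (fun n => S.le_opNorm_of_le (hu1 n).le |>.trans (by simp))
  obtain ⟨θ, hθ, hθu⟩ := h.2 u (fun n => (hu1 n).le) hlim
  have h1 : Tendsto (fun n => ‖S (θ n • u n)‖) atTop (𝓝 ‖S x₀‖) :=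
    ((S.continuous.tendsto x₀).comp hθu).norm
  have h2 : (fun n => ‖S (θ n • u n)‖) = fun n => ‖S (u n)‖ := by
    funext n; rw [map_smul, norm_smul, hθ, one_mul]
  rw [h2] at h1
  exact tendsto_nhds_unique h1 hlim

set_option maxHeartbeats 1000000 in
private lemma core6 {S : X →L[𝕜] Y} {x₀ : X} (hS : AbsStronglyExposes S x₀)
    (ys : Y →L[𝕜] 𝕜) (hys : ‖ys‖ ≤ 1) (hre : re (ys (S x₀)) = ‖S‖) (hpos : 0 < ‖S‖) :
    StronglyExposesBall (ys.comp S) x₀ := by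
  set g := ys.comp S with hg
  have hgapp : ∀ x, g x = ys (S x) := fun x => rfl
  have hgle : ‖g‖ ≤ ‖S‖ := le_trans (ContinuousLinearMap.opNorm_comp_le ys S)
    (by nlinarith [S.opNorm_nonneg])
  have hgx₀ : re (g x₀) = ‖S‖ := hre
  have hgnorm : ‖g‖ = ‖S‖ := by
    refine le_antisymm hgle ?_
    calc ‖S‖ = re (g x₀) := hgx₀.symm
      _ ≤ ‖g x₀‖ := re_le_norm _
      _ ≤ ‖g‖ * ‖x₀‖ := g.le_opNorm x₀
      _ ≤ ‖g‖ * 1 := by nlinarith [g.opNorm_nonneg, hS.1]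
      _ = ‖g‖ := mul_one _
  refine ⟨hS.1, by rw [hgx₀, hgnorm], fun u hu hru => ?_⟩
  rw [hgnorm] at hru
  set c := ‖S‖ with hc
  have hbound : ∀ n, re (g (u n)) ≤ ‖S (u n)‖ := by
    intro n
    have h1 : re (g (u n)) ≤ ‖ys (S (u n))‖ := re_le_norm _
    have h2 : ‖ys (S (u n))‖ ≤ ‖ys‖ * ‖S (u n)‖ := ys.le_opNorm _
    have h3 : ‖ys‖ * ‖S (u n)‖ ≤ 1 * ‖S (u n)‖ := mul_le_mul_of_nonneg_right hys (norm_nonneg _)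
    rw [one_mul] at h3
    linarith
  have hSub : ∀ n, ‖S (u n)‖ ≤ c := fun n =>
    le_trans (S.le_opNorm _) (by nlinarith [S.opNorm_nonneg, hu n])
  have hSlim : Tendsto (fun n => ‖S (u n)‖) atTop (𝓝 c) :=
    tendsto_of_tendsto_of_tendsto_of_le_of_le hru tendsto_const_nhds hbound hSub
  obtain ⟨θ, hθ, hθu⟩ := hS.2 u hu hSlim
  have haub : ∀ n, ‖g (u n)‖ ≤ c := fun n =>
    le_trans (g.le_opNorm _) (by nlinarith [g.opNorm_nonneg, hu n, hgle, hgnorm.ge, hgnorm.le])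
  have ha : Tendsto (fun n => g (u n)) atTop (𝓝 (c : 𝕜)) := tendsto_of_re6 _ haub hru
  have hgx0c : g x₀ = (c : 𝕜) := eq_of_re6 _ (by
      calc ‖g x₀‖ ≤ ‖g‖ * ‖x₀‖ := g.le_opNorm x₀
        _ ≤ c := by nlinarith [g.opNorm_nonneg, hS.1, hgnorm.le]) hgx₀
  have hb : Tendsto (fun n => θ n * g (u n)) atTop (𝓝 (c : 𝕜)) := by
    have h1 : Tendsto (fun n => g (θ n • u n)) atTop (𝓝 (g x₀)) :=
      (g.continuous.tendsto x₀).comp hθu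
    rw [hgx0c] at h1
    refine h1.congr fun n => ?_
    rw [map_smul, smul_eq_mul]
  have hcne : (c : 𝕜) ≠ 0 := by
    simpa using ne_of_gt hpos
  have hθlim : Tendsto θ atTop (𝓝 1) := by
    have hquot : Tendsto (fun n => (θ n * g (u n)) * (g (u n))⁻¹) atTop
        (𝓝 ((c : 𝕜) * (c : 𝕜)⁻¹)) := hb.mul (ha.inv₀ hcne)
    rw [mul_inv_cancel₀ hcne] at hquot
    have hev : ∀ᶠ n in atTop, (θ n * g (u n)) * (g (u n))⁻¹ = θ n := by
      have : ∀ᶠ n in atTop, g (u n) ≠ 0 := ha.eventually_ne hcne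
      filter_upwards [this] with n hn
      field_simp
    exact hquot.congr' hev
  have hinv : Tendsto (fun n => (θ n)⁻¹) atTop (𝓝 1) := by
    simpa using hθlim.inv₀ one_ne_zero
  have hfin := hinv.smul hθu
  have heq : ∀ n, (θ n)⁻¹ • (θ n • u n) = u n := fun n =>
    inv_smul_smul₀ (norm_ne_zero_iff.mp (by rw [hθ n]; exact one_ne_zero)) (u n)
  simpa [heq] using hfin.congr heq

end AuxStmt6

set_option maxHeartbeats 2000000 in
theorem stmt6 {𝕜 X Y : Type} [RCLike 𝕜]
    [NormedAddCommGroup X] [NormedSpace 𝕜 X] [CompleteSpace X]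
    [NormedAddCommGroup Y] [NormedSpace 𝕜 Y] [CompleteSpace Y] [Nontrivial Y]
    (hdense : Dense {T : X →L[𝕜] Y | ∃ x₀, AbsStronglyExposes T x₀}) :
    Dense {f : X →L[𝕜] 𝕜 | ∃ x₀, StronglyExposesBall f x₀} := by
  rcases subsingleton_or_nontrivial X with hX | hX
  · intro f
    refine subset_closure ⟨0, ?_, ?_, ?_⟩
    · simp
    · have hf : f = 0 := by
        ext x
        have : x = 0 := Subsingleton.elim x 0
        simp [this]
      simp [hf]
    · intro u hu hru
      have : ∀ n, u n = (0 : X) := fun n => Subsingleton.elim _ _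
      simpa [this] using tendsto_const_nhds
  · rw [Metric.dense_iff]
    intro f ε hε
    obtain ⟨h, hpos, hclose⟩ : ∃ h : X →L[𝕜] 𝕜, 0 < ‖h‖ ∧ ‖h - f‖ < ε / 2 := by
      by_cases hf : f = 0
      · obtain ⟨x, hx⟩ := exists_ne (0 : X)
        obtain ⟨φ, hφ1, hφx⟩ := exists_dual_vector 𝕜 x (norm_ne_zero_iff.mpr hx)
        have hns : ‖((ε / 4 : ℝ) : 𝕜) • φ‖ = ‖((ε / 4 : ℝ) : 𝕜)‖ * ‖φ‖ := norm_smul ((ε / 4 : ℝ) : 𝕜) φ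
        refine ⟨((ε / 4 : ℝ) : 𝕜) • φ, ?_, ?_⟩
        · rw [hns, hφ1, mul_one, RCLike.norm_ofReal, abs_of_pos (by positivity)]
          positivity
        · rw [hf, sub_zero, hns, hφ1, mul_one, RCLike.norm_ofReal,
            abs_of_pos (by positivity)]
          linarith
      · refine ⟨f, norm_pos_iff.mpr hf, by simpa using half_pos hε⟩
    set δ := min (‖h‖ / 8) (ε / 8) with hδdef
    have hδpos : 0 < δ := lt_min (by positivity) (by positivity)
    have hδh : δ ≤ ‖h‖ / 8 := min_le_left _ _
    have hδε : δ ≤ ε / 8 := min_le_right _ _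
    obtain ⟨y, hy⟩ := exists_ne (0 : Y)
    set y₀ : Y := ((‖y‖ : 𝕜))⁻¹ • y with hy₀def
    have hy₀ : ‖y₀‖ = 1 := by
      rw [hy₀def, norm_smul, norm_inv, RCLike.norm_ofReal,
        abs_of_pos (norm_pos_iff.mpr hy), inv_mul_cancel₀ (norm_ne_zero_iff.mpr hy)]
    set T := h.smulRight y₀ with hTdef
    have hT : ‖T‖ = ‖h‖ := by
      rw [hTdef, ContinuousLinearMap.norm_smulRight_apply, hy₀, mul_one]
    obtain ⟨S, hSball, x₀, hASE⟩ := Metric.dense_iff.mp hdense T δ hδpos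
    have hST : ‖S - T‖ < δ := by
      rw [← dist_eq_norm]; exact Metric.mem_ball.mp hSball
    have hSnorm : ‖h‖ - δ ≤ ‖S‖ := by
      have h1 : ‖T‖ - ‖S‖ ≤ ‖T - S‖ := norm_sub_norm_le T S
      rw [norm_sub_rev] at h1
      linarith [hT.ge, hT.le]
    have hSpos : 0 < ‖S‖ := by linarith
    have hSx₀ : ‖S x₀‖ = ‖S‖ := norm_attain6 hASE
    have hSx₀ne : S x₀ ≠ 0 := by
      rw [← norm_ne_zero_iff, hSx₀]; exact ne_of_gt hSpos
    obtain ⟨ys, hys1, hysx⟩ := exists_dual_vector 𝕜 (S x₀) (norm_ne_zero_iff.mpr hSx₀ne)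
    set lam : 𝕜 := ys y₀ with hlamdef
    have hx₀1 : ‖x₀‖ ≤ 1 := hASE.1
    have hTx : ys (T x₀) = h x₀ * lam := by
      rw [hTdef, ContinuousLinearMap.smulRight_apply, map_smul, smul_eq_mul, hlamdef]
    have hreS : re (ys (S x₀)) = ‖S‖ := by rw [hysx, RCLike.ofReal_re, hSx₀]
    have hdiff : ‖ys (T x₀) - ys (S x₀)‖ ≤ δ := by
      rw [← map_sub]
      calc ‖ys (T x₀ - S x₀)‖ ≤ ‖ys‖ * ‖T x₀ - S x₀‖ := ys.le_opNorm _
        _ = ‖T x₀ - S x₀‖ := by rw [hys1, one_mul]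
        _ = ‖(T - S) x₀‖ := by rw [ContinuousLinearMap.sub_apply]
        _ ≤ ‖T - S‖ * ‖x₀‖ := (T - S).le_opNorm x₀
        _ ≤ δ * 1 := by
            rw [norm_sub_rev]
            exact mul_le_mul hST.le hx₀1 (norm_nonneg _) hδpos.le
        _ = δ := mul_one _
    have hre1 : ‖S‖ - δ ≤ re (ys (T x₀)) := by
      have h1 : |re (ys (T x₀) - ys (S x₀))| ≤ ‖ys (T x₀) - ys (S x₀)‖ := abs_re_le_norm _
      rw [map_sub] at h1
      have h2 : re (ys (T x₀)) - re (ys (S x₀)) ≥ -δ := by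
        cases' abs_le.mp (h1.trans hdiff) with hl hr
        linarith
      linarith
    have hre2 : ‖h‖ - 2 * δ ≤ re (h x₀ * lam) := by
      rw [← hTx]; linarith
    have hlam_le : ‖lam‖ ≤ 1 := by
      calc ‖lam‖ ≤ ‖ys‖ * ‖y₀‖ := ys.le_opNorm _
        _ = 1 := by rw [hys1, hy₀, one_mul]
    have hhx₀ : ‖h x₀‖ ≤ ‖h‖ := by
      calc ‖h x₀‖ ≤ ‖h‖ * ‖x₀‖ := h.le_opNorm _
        _ ≤ ‖h‖ * 1 := mul_le_mul_of_nonneg_left hx₀1 (norm_nonneg _)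
        _ = ‖h‖ := mul_one _
    have hlam_ge : ‖h‖ - 2 * δ ≤ ‖h‖ * ‖lam‖ := by
      calc ‖h‖ - 2 * δ ≤ re (h x₀ * lam) := hre2
        _ ≤ ‖h x₀ * lam‖ := re_le_norm _
        _ = ‖h x₀‖ * ‖lam‖ := norm_mul _ _
        _ ≤ ‖h‖ * ‖lam‖ := mul_le_mul_of_nonneg_right hhx₀ (norm_nonneg _)
    have hlam_ne : lam ≠ 0 := by
      intro h0
      rw [h0, norm_zero, mul_zero] at hlam_ge
      linarith
    have hlam_pos : 0 < ‖lam‖ := norm_pos_iff.mpr hlam_ne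
    have h1lam : (1 - ‖lam‖) * ‖h‖ ≤ 2 * δ := by nlinarith
    set μ : 𝕜 := (starRingEnd 𝕜) lam * ((‖lam‖ : ℝ) : 𝕜)⁻¹ with hμdef
    have hμ : ‖μ‖ = 1 := by
      rw [hμdef, norm_mul, RCLike.norm_conj, norm_inv, RCLike.norm_ofReal,
        abs_of_pos hlam_pos, mul_inv_cancel₀ (ne_of_gt hlam_pos)]
    have hlamcast : ((‖lam‖ : ℝ) : 𝕜) ≠ 0 := by
      simpa using ne_of_gt hlam_pos
    have hμlam : μ * lam = ((‖lam‖ : ℝ) : 𝕜) := by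
      have hc : (starRingEnd 𝕜) lam * lam = ((‖lam‖ : ℝ) : 𝕜) ^ 2 := by
        simpa using RCLike.conj_mul lam
      calc μ * lam = ((starRingEnd 𝕜) lam * lam) * ((‖lam‖ : ℝ) : 𝕜)⁻¹ := by
            rw [hμdef]; ring
        _ = ((‖lam‖ : ℝ) : 𝕜) ^ 2 * ((‖lam‖ : ℝ) : 𝕜)⁻¹ := by rw [hc]
        _ = ((‖lam‖ : ℝ) : 𝕜) := by
            rw [sq, mul_assoc, mul_inv_cancel₀ hlamcast, mul_one]
    set g := (μ • ys).comp S with hgdef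
    have hμys : ‖μ • ys‖ ≤ 1 := by
      rw [show ‖μ • ys‖ = ‖μ‖ * ‖ys‖ from norm_smul μ ys, hμ, hys1, one_mul]
    have hμconj : ‖(starRingEnd 𝕜) μ‖ = 1 := by rw [RCLike.norm_conj, hμ]
    have hre3 : re ((μ • ys) (S ((starRingEnd 𝕜) μ • x₀))) = ‖S‖ := by
      rw [map_smul, map_smul, ContinuousLinearMap.smul_apply, smul_eq_mul, smul_eq_mul,
        ← mul_assoc, RCLike.conj_mul, hμ]
      simp [hreS]
    have hgmem : StronglyExposesBall g ((starRingEnd 𝕜) μ • x₀) :=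
      core6 (ase_smul6 hASE hμconj) (μ • ys) hμys hre3 hSpos
    have hgh : ∀ x : X, ‖g x - h x‖ ≤ 3 * δ * ‖x‖ := by
      intro x
      have e1 : g x = μ * ys (S x) := by
        rw [hgdef, ContinuousLinearMap.comp_apply, ContinuousLinearMap.smul_apply, smul_eq_mul]
      have e2 : ys (T x) = h x * lam := by
        rw [hTdef, ContinuousLinearMap.smulRight_apply, map_smul, smul_eq_mul, hlamdef]
      have key : g x - h x = μ * ys ((S - T) x) + (((‖lam‖ : ℝ) : 𝕜) - 1) * h x := by
        rw [ContinuousLinearMap.sub_apply, map_sub, e2, e1, ← hμlam]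
        ring
      have b1 : ‖μ * ys ((S - T) x)‖ ≤ δ * ‖x‖ := by
        rw [norm_mul, hμ, one_mul]
        calc ‖ys ((S - T) x)‖ ≤ ‖ys‖ * ‖(S - T) x‖ := ys.le_opNorm _
          _ = ‖(S - T) x‖ := by rw [hys1, one_mul]
          _ ≤ ‖S - T‖ * ‖x‖ := (S - T).le_opNorm x
          _ ≤ δ * ‖x‖ := mul_le_mul_of_nonneg_right hST.le (norm_nonneg _)
      have b2 : ‖(((‖lam‖ : ℝ) : 𝕜) - 1) * h x‖ ≤ 2 * δ * ‖x‖ := by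
        rw [norm_mul]
        have hn : ‖(((‖lam‖ : ℝ) : 𝕜) - 1)‖ = 1 - ‖lam‖ := by
          rw [show (((‖lam‖ : ℝ) : 𝕜) - 1) = (((‖lam‖ - 1 : ℝ)) : 𝕜) by push_cast; ring,
            RCLike.norm_ofReal, abs_of_nonpos (by linarith)]
          ring
        rw [hn]
        have hhx : ‖h x‖ ≤ ‖h‖ * ‖x‖ := h.le_opNorm x
        have h2 : (1 - ‖lam‖) * ‖h x‖ ≤ (1 - ‖lam‖) * (‖h‖ * ‖x‖) :=
          mul_le_mul_of_nonneg_left hhx (by linarith)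
        have h3 : (1 - ‖lam‖) * (‖h‖ * ‖x‖) = ((1 - ‖lam‖) * ‖h‖) * ‖x‖ := by ring
        have h4 : ((1 - ‖lam‖) * ‖h‖) * ‖x‖ ≤ (2 * δ) * ‖x‖ :=
          mul_le_mul_of_nonneg_right h1lam (norm_nonneg _)
        linarith
      calc ‖g x - h x‖ = ‖μ * ys ((S - T) x) + (((‖lam‖ : ℝ) : 𝕜) - 1) * h x‖ := by rw [key]
        _ ≤ ‖μ * ys ((S - T) x)‖ + ‖(((‖lam‖ : ℝ) : 𝕜) - 1) * h x‖ := norm_add_le _ _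
        _ ≤ δ * ‖x‖ + 2 * δ * ‖x‖ := add_le_add b1 b2
        _ = 3 * δ * ‖x‖ := by ring
    have hgh' : ‖g - h‖ ≤ 3 * δ := by
      refine ContinuousLinearMap.opNorm_le_bound _ (by positivity) fun x => ?_
      rw [ContinuousLinearMap.sub_apply]
      exact hgh x
    refine ⟨g, Metric.mem_ball.mpr ?_, ⟨_, hgmem⟩⟩
    rw [dist_eq_norm]
    calc ‖g - f‖ ≤ ‖g - h‖ + ‖h - f‖ := norm_sub_le_norm_sub_add_norm_sub g h f
      _ < 3 * δ + ε / 2 := by linarith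
      _ ≤ 3 * (ε / 8) + ε / 2 := by linarith
      _ < ε := by linarith
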